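/- arXiv:1604.08179 — 4 statements merged into one kernel-verified Lean document; each statement's English description precedes it below -/
import Mathlib

section
/- In every pairwise-stable connected graph G on V, for every pair of distinct nodes i, j ∈ T_A, the distance satisfies d_G(i,j) ≤ √((1−2A)² + 4·c_A) − 2(A−1). -/
open SimpleGraph Classical
open scoped ENNReal

noncomputable section

variable {V : Type*} [Fintype V] [DecidableEq V]

/-- The degree of node `i` in `G`. -/
def degE (G : SimpleGraph V) (i : V) : ℕ := (G.neighborSet i).ncard

/-- The hop distance between `i` and `j`, with value `+∞` for unreachable pairs. -/
def dE (G : SimpleGraph V) (i j : V) : ℝ≥0∞ :=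
  if G.Reachable i j then (G.dist i j : ℝ≥0∞) else ⊤

/-- Basic model: the cost of node `i`, where a node of type A (in `TA`) pays link
cost `cA`, a node of type B (not in `TA`) pays `cB`, distances to type-A nodes are
weighted by `A` and to type-B nodes by `1`. -/
def cost (TA : Finset V) (A cA cB : ℝ) (G : SimpleGraph V) (i : V) : ℝ≥0∞ :=
  (degE G i : ℝ≥0∞) * ENNReal.ofReal (if i ∈ TA then cA else cB)
    + ENNReal.ofReal A * ∑ j ∈ TA, dE G i j
    + ∑ j ∈ TAᶜ, dE G i j

/-- `G` with the edge `ij` removed. -/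
def delE (G : SimpleGraph V) (i j : V) : SimpleGraph V := G.deleteEdges {s(i, j)}

/-- `G` with the edge `ij` added. -/
def addE (G : SimpleGraph V) (i j : V) : SimpleGraph V := G ⊔ edge i j

/-- Pairwise stability: removing any present edge strictly increases the cost of both
endpoints, and adding any absent edge strictly increases the cost of at least one
endpoint. -/
def PairwiseStable (TA : Finset V) (A cA cB : ℝ) (G : SimpleGraph V) : Prop :=
  (∀ i j : V, G.Adj i j →
    cost TA A cA cB G i < cost TA A cA cB (delE G i j) i ∧
    cost TA A cA cB G j < cost TA A cA cB (delE G i j) j) ∧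
  (∀ i j : V, i ≠ j → ¬ G.Adj i j →
    cost TA A cA cB G i < cost TA A cA cB (addE G i j) i ∨
    cost TA A cA cB G j < cost TA A cA cB (addE G i j) j)


set_option linter.unusedSectionVars false in
private lemma edge_comm' (i j : V) : (edge i j : SimpleGraph V) = edge j i := by
  unfold SimpleGraph.edge
  rw [Sym2.eq_swap]

set_option linter.unusedSectionVars false in
private lemma walk_length_drop {G : SimpleGraph V} {u v : V} (p : G.Walk u v) (n : ℕ) :
    (p.drop n).length = p.length - n := by
  induction p generalizing n with
  | nil => simp [SimpleGraph.Walk.drop]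
  | cons h q ih =>
    cases n with
    | zero => simp [SimpleGraph.Walk.drop]
    | succ n =>
      simp only [SimpleGraph.Walk.drop, SimpleGraph.Walk.length_copy, ih,
        SimpleGraph.Walk.length_cons]
      rw [Nat.add_sub_add_right]
      exact ih n

set_option linter.unusedSectionVars false in
private lemma dist_le_of_le {G G' : SimpleGraph V} (h : G ≤ G') {u v : V} (hr : G.Reachable u v) :
    G'.dist u v ≤ G.dist u v := by
  obtain ⟨p, hp⟩ := hr.exists_walk_length_eq_dist
  calc G'.dist u v ≤ (p.mapLe h).length := SimpleGraph.dist_le _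
    _ = p.length := by simp
    _ = G.dist u v := hp

private def Ssum (d : ℕ) : ℕ := ∑ k ∈ Finset.range d, (2 * k - (d + 1))

private lemma Ssum_step' (d : ℕ) : Ssum (d + 2) = Ssum d + (d - 1) := by
  unfold Ssum
  rw [Finset.sum_range_succ, Finset.sum_range_succ']
  rw [Finset.sum_congr rfl (fun k _ => show 2 * (k + 1) - (d + 2 + 1) = 2 * k - (d + 1) by omega)]
  omega

private lemma Ssum_ge' (d : ℕ) : 2 ≤ d → ((d : ℤ) - 1) * ((d : ℤ) - 3) ≤ 4 * (Ssum d : ℤ) := by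
  induction d using Nat.strong_induction_on with
  | _ d ih =>
    intro hd
    rcases lt_or_ge d 4 with h4 | h4
    · interval_cases d
      · norm_num [Ssum, Finset.sum_range_succ]
      · norm_num [Ssum, Finset.sum_range_succ]
    · obtain ⟨n, rfl⟩ : ∃ n, d = n + 2 + 2 := ⟨d - 4, by omega⟩
      have h := ih (n + 2) (by omega) (by omega)
      rw [Ssum_step']
      have he : (n : ℤ) + 2 + 2 = (n + 2 : ℕ) + 2 := by push_cast; ring
      push_cast [show n + 2 - 1 = n + 1 from rfl] at h ⊢
      nlinarith [h]

set_option linter.unusedSectionVars false in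
private lemma aux (TA : Finset V) (A cA cB : ℝ) (hA : 1 < A) (hcA0 : 0 ≤ cA)
    (G : SimpleGraph V) (hconn : G.Connected) (i j : V) (hi : i ∈ TA) (hj : j ∈ TA)
    (hij : i ≠ j) (hnadj : ¬ G.Adj i j)
    (hlt : cost TA A cA cB G i < cost TA A cA cB (addE G i j) i) :
    A * ((G.dist i j : ℝ) - 1) + (Ssum (G.dist i j) : ℝ) < cA := by
  have hA0 : (0:ℝ) ≤ A := by linarith
  set G' : SimpleGraph V := addE G i j with hG'def
  set d : ℕ := G.dist i j with hddef
  have hle : G ≤ G' := le_sup_left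
  have hconn' : G'.Connected := hconn.mono hle
  have hadj' : G'.Adj i j := by
    refine Or.inr ?_
    rw [SimpleGraph.edge_adj]
    exact ⟨Or.inl ⟨rfl, rfl⟩, hij⟩
  have hreach : ∀ k, G.Reachable i k := fun k => hconn.preconnected i k
  have hreach' : ∀ k, G'.Reachable i k := fun k => hconn'.preconnected i k
  have hd' : ∀ k, G'.dist i k ≤ G.dist i k := fun k => dist_le_of_le hle (hreach k)
  have hd1 : 1 ≤ d := hconn.pos_dist_of_ne hij
  have hdist'ij : G'.dist i j = 1 := SimpleGraph.dist_eq_one_iff_adj.mpr hadj'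
  -- degree increases by one
  have hdeg : degE G' i = degE G i + 1 := by
    have hns : G'.neighborSet i = insert j (G.neighborSet i) := by
      ext v
      simp only [SimpleGraph.mem_neighborSet, hG'def, addE, SimpleGraph.sup_adj,
        SimpleGraph.edge_adj, Set.mem_insert_iff]
      constructor
      · rintro (h | ⟨h1 | h1, hne⟩) <;> tauto
      · rintro (rfl | h)
        · exact Or.inr ⟨Or.inl ⟨trivial, rfl⟩, hij⟩
        · exact Or.inl h
    rw [degE, degE, hns, Set.ncard_insert_of_notMem (by simpa using hnadj)]
  -- cost as ofReal of a real expression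
  have hcost : ∀ (H : SimpleGraph V), (∀ k, H.Reachable i k) →
      cost TA A cA cB H i = ENNReal.ofReal ((degE H i : ℝ) * cA
        + A * ∑ k ∈ TA, (H.dist i k : ℝ) + ∑ k ∈ TAᶜ, (H.dist i k : ℝ)) := by
    intro H hr
    have hsum : ∀ s : Finset V, ∑ k ∈ s, dE H i k
        = ENNReal.ofReal (∑ k ∈ s, (H.dist i k : ℝ)) := by
      intro s
      rw [ENNReal.ofReal_sum_of_nonneg (fun k _ => Nat.cast_nonneg _)]
      exact Finset.sum_congr rfl fun k _ => by
        rw [dE, if_pos (hr k), ENNReal.ofReal_natCast]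
    have h1 : (0:ℝ) ≤ (degE H i : ℝ) * cA := mul_nonneg (Nat.cast_nonneg _) hcA0
    have h2 : (0:ℝ) ≤ A * ∑ k ∈ TA, (H.dist i k : ℝ) :=
      mul_nonneg hA0 (Finset.sum_nonneg fun k _ => Nat.cast_nonneg _)
    have h3 : (0:ℝ) ≤ ∑ k ∈ TAᶜ, (H.dist i k : ℝ) :=
      Finset.sum_nonneg fun k _ => Nat.cast_nonneg _
    rw [ENNReal.ofReal_add (add_nonneg h1 h2) h3, ENNReal.ofReal_add h1 h2,
      ENNReal.ofReal_mul (Nat.cast_nonneg _), ENNReal.ofReal_mul hA0,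
      ENNReal.ofReal_natCast, ← hsum TA, ← hsum TAᶜ, cost, if_pos hi]
  -- to a real inequality
  rw [hcost G hreach, hcost G' hreach'] at hlt
  have hnn : (0:ℝ) ≤ (degE G i : ℝ) * cA + A * ∑ k ∈ TA, (G.dist i k : ℝ)
      + ∑ k ∈ TAᶜ, (G.dist i k : ℝ) := by
    have h1 : (0:ℝ) ≤ (degE G i : ℝ) * cA := mul_nonneg (Nat.cast_nonneg _) hcA0
    have h2 : (0:ℝ) ≤ A * ∑ k ∈ TA, (G.dist i k : ℝ) :=
      mul_nonneg hA0 (Finset.sum_nonneg fun k _ => Nat.cast_nonneg _)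
    have h3 : (0:ℝ) ≤ ∑ k ∈ TAᶜ, (G.dist i k : ℝ) :=
      Finset.sum_nonneg fun k _ => Nat.cast_nonneg _
    linarith
  have hR := (ENNReal.ofReal_lt_ofReal_iff_of_nonneg hnn).mp hlt
  -- savings function
  set δ : V → ℕ := fun k => G.dist i k - G'.dist i k with hδdef
  have hδ : ∀ k, (G.dist i k : ℝ) = (G'.dist i k : ℝ) + (δ k : ℝ) := by
    intro k
    have h := hd' k
    rw [hδdef]
    push_cast [Nat.cast_sub h]
    ring
  have hsumsplit : ∀ s : Finset V, ∑ k ∈ s, (G.dist i k : ℝ)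
      = ∑ k ∈ s, (G'.dist i k : ℝ) + ∑ k ∈ s, (δ k : ℝ) := by
    intro s
    rw [← Finset.sum_add_distrib]
    exact Finset.sum_congr rfl fun k _ => hδ k
  rw [hsumsplit TA, hsumsplit TAᶜ, hdeg, mul_add] at hR
  push_cast at hR
  have key1 : A * ∑ k ∈ TA, (δ k : ℝ) + ∑ k ∈ TAᶜ, (δ k : ℝ) < cA := by linarith
  -- shortest path and per-vertex savings
  obtain ⟨p, hp⟩ := (hreach j).exists_walk_length_eq_dist
  rw [← hddef] at hp
  have hvt : ∀ t, t ≤ d → G.dist i (p.getVert t) = t ∧ G.dist (p.getVert t) j ≤ d - t := by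
    intro t ht
    have h2 : G.dist (p.getVert t) j ≤ d - t := by
      have := SimpleGraph.dist_le (p.drop t)
      rwa [walk_length_drop, hp] at this
    have h1le : G.dist i (p.getVert t) ≤ t := by
      have hgv : p.reverse.getVert (d - t) = p.getVert t := by
        rw [SimpleGraph.Walk.getVert_reverse, hp]
        congr 1
        omega
      have h := SimpleGraph.dist_le (p.reverse.drop (d - t))
      rw [walk_length_drop, SimpleGraph.Walk.length_reverse, hp, hgv] at h
      rw [SimpleGraph.dist_comm]
      calc G.dist (p.getVert t) i ≤ d - (d - t) := h
        _ = t := by omega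
    have htri : G.dist i j ≤ G.dist i (p.getVert t) + G.dist (p.getVert t) j :=
      hconn.dist_triangle
    rw [← hddef] at htri
    exact ⟨by omega, h2⟩
  have hvd : p.getVert d = j := by rw [← hp]; exact p.getVert_length
  have hδjℕ : δ j = d - 1 := by rw [hδdef]; simp only []; rw [hdist'ij, ← hddef]
  have hterm : ∀ t ∈ Finset.range d, 2 * t - (d + 1) ≤ δ (p.getVert t) := by
    intro t ht
    simp only [Finset.mem_range] at ht
    have h1 := (hvt t ht.le).1
    have h2 := (hvt t ht.le).2
    have h3 : G'.dist i (p.getVert t) ≤ 1 + (d - t) := by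
      calc G'.dist i (p.getVert t)
          ≤ G'.dist i j + G'.dist j (p.getVert t) := hconn'.dist_triangle
        _ = 1 + G'.dist j (p.getVert t) := by rw [hdist'ij]
        _ ≤ 1 + G.dist j (p.getVert t) := by
            exact Nat.add_le_add_left (dist_le_of_le hle ((hreach j).symm.trans (hreach _))) 1
        _ = 1 + G.dist (p.getVert t) j := by rw [SimpleGraph.dist_comm]
        _ ≤ 1 + (d - t) := by omega
    show 2 * t - (d + 1) ≤ G.dist i (p.getVert t) - G'.dist i (p.getVert t)
    omega
  have hinj : ∀ a ∈ Finset.range (d + 1), ∀ b ∈ Finset.range (d + 1),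
      p.getVert a = p.getVert b → a = b := by
    intro a ha b hb hab
    simp only [Finset.mem_range] at ha hb
    have h1 := (hvt a (by omega)).1
    have h2 := (hvt b (by omega)).1
    rw [hab] at h1
    omega
  have hNsum : (d - 1) + Ssum d ≤ ∑ k ∈ Finset.univ, δ k := by
    have himage : ∑ k ∈ (Finset.range (d + 1)).image p.getVert, δ k
        = ∑ t ∈ Finset.range (d + 1), δ (p.getVert t) := Finset.sum_image hinj
    have hsub : ∑ k ∈ (Finset.range (d + 1)).image p.getVert, δ k
        ≤ ∑ k ∈ Finset.univ, δ k :=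
      Finset.sum_le_sum_of_subset (Finset.subset_univ _)
    have hS : Ssum d ≤ ∑ t ∈ Finset.range d, δ (p.getVert t) := Finset.sum_le_sum hterm
    have hsplit : ∑ t ∈ Finset.range (d + 1), δ (p.getVert t)
        = ∑ t ∈ Finset.range d, δ (p.getVert t) + δ (p.getVert d) :=
      Finset.sum_range_succ _ _
    rw [hvd, hδjℕ] at hsplit
    omega
  -- assemble
  have hcast : ((d : ℝ) - 1) + (Ssum d : ℝ) ≤ ∑ k ∈ TA, (δ k : ℝ) + ∑ k ∈ TAᶜ, (δ k : ℝ) := by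
    have h := hNsum
    have hc : ((d - 1 + Ssum d : ℕ) : ℝ) ≤ ((∑ k ∈ Finset.univ, δ k : ℕ) : ℝ) := by
      exact_mod_cast h
    push_cast [Nat.cast_sub hd1] at hc
    rw [Finset.sum_add_sum_compl TA (fun k => (δ k : ℝ))]
    exact_mod_cast hc
  have hj_le : (δ j : ℝ) ≤ ∑ k ∈ TA, (δ k : ℝ) :=
    Finset.single_le_sum (f := fun k => (δ k : ℝ)) (fun k _ => Nat.cast_nonneg _) hj
  have hδjR : (δ j : ℝ) = (d : ℝ) - 1 := by
    rw [hδjℕ]; push_cast [Nat.cast_sub hd1]; ring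
  nlinarith [key1, hcast, mul_nonneg (sub_nonneg.mpr hA.le) (sub_nonneg.mpr (hδjR ▸ hj_le))]

/-- In every pairwise-stable connected graph, the distance between any
two distinct nodes `i, j ∈ T_A` is at most `√((1-2A)² + 4c_A) - 2(A-1)`. -/
theorem stmt2 (TA : Finset V) (A cA cB : ℝ)
    (hA : 1 < A) (hcA : 1 < cA) (hAB : cA ≤ cB)
    (G : SimpleGraph V) (hconn : G.Connected)
    (hstable : PairwiseStable TA A cA cB G)
    (i j : V) (hi : i ∈ TA) (hj : j ∈ TA) (hij : i ≠ j) :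
    (G.dist i j : ℝ) ≤ Real.sqrt ((1 - 2 * A) ^ 2 + 4 * cA) - 2 * (A - 1) := by
  have hd1 : 1 ≤ G.dist i j := hconn.pos_dist_of_ne hij
  have key : ((G.dist i j : ℝ) - 1) * ((G.dist i j : ℝ) + 4 * A - 3) ≤ 4 * cA := by
    rcases le_or_gt 2 (G.dist i j) with hd2 | hd2
    · have hnadj : ¬ G.Adj i j := by
        intro h
        have := SimpleGraph.dist_eq_one_iff_adj.mpr h
        omega
      have hZ := Ssum_ge' (G.dist i j) hd2
      have hZ' : ((G.dist i j : ℝ) - 1) * ((G.dist i j : ℝ) - 3)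
          ≤ 4 * (Ssum (G.dist i j) : ℝ) := by exact_mod_cast hZ
      rcases hstable.2 i j hij hnadj with hlt | hlt
      · have hx := aux TA A cA cB hA (by linarith) G hconn i j hi hj hij hnadj hlt
        nlinarith [hx, hZ']
      · have hcomm : addE G i j = addE G j i := by rw [addE, addE, edge_comm']
        have hlt' : cost TA A cA cB G j < cost TA A cA cB (addE G j i) j := by
          rwa [hcomm] at hlt
        have hx := aux TA A cA cB hA (by linarith) G hconn j i hj hi hij.symm
          (fun h => hnadj h.symm) hlt'
        rw [show G.dist j i = G.dist i j from SimpleGraph.dist_comm] at hx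
        nlinarith [hx, hZ']
    · have h1 : G.dist i j = 1 := by omega
      rw [h1]
      push_cast
      nlinarith [hcA]
  have hx0 : (0:ℝ) < (G.dist i j : ℝ) + 2 * (A - 1) := by
    have h1 : (1:ℝ) ≤ (G.dist i j : ℝ) := by exact_mod_cast hd1
    linarith
  rw [le_sub_iff_add_le]
  have h2 : ((G.dist i j : ℝ) + 2 * (A - 1)) ^ 2 ≤ (1 - 2 * A) ^ 2 + 4 * cA := by
    nlinarith [key]
  calc (G.dist i j : ℝ) + 2 * (A - 1)
      ≤ Real.sqrt (((G.dist i j : ℝ) + 2 * (A - 1)) ^ 2) := by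
        rw [Real.sqrt_sq hx0.le]
    _ ≤ Real.sqrt ((1 - 2 * A) ^ 2 + 4 * cA) := Real.sqrt_le_sqrt h2


end
end

section
/- If additionally c_A < A, then in every pairwise-stable connected graph G on V, every two distinct nodes of T_A are adjacent; that is, T_A induces a complete subgraph (the type-A clique). -/
open SimpleGraph Classical
open scoped ENNReal

noncomputable section

variable {V : Type*} [Fintype V] [DecidableEq V]

lemma dE_anti {G H : SimpleGraph V} (hle : G ≤ H) (u v : V) : dE H u v ≤ dE G u v := by
  unfold dE
  by_cases hGr : G.Reachable u v
  · rw [if_pos hGr, if_pos (hGr.mono hle)]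
    exact_mod_cast hGr.dist_anti hle
  · rw [if_neg hGr]; exact le_top

lemma key (TA : Finset V) (A cA cB : ℝ) (hAA : cA ≤ A)
    (G : SimpleGraph V) (i j : V) (hi : i ∈ TA) (hj : j ∈ TA)
    (hne : i ≠ j) (hnadj : ¬ G.Adj i j) (hr : G.Reachable i j) :
    cost TA A cA cB (addE G i j) i ≤ cost TA A cA cB G i := by
  set H := addE G i j with hH
  have hle : G ≤ H := le_sup_left
  have hHadj : H.Adj i j := by
    refine Or.inr ?_
    rw [edge_adj]
    exact ⟨Or.inl ⟨rfl, rfl⟩, hne⟩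
  have hnbr : H.neighborSet i = insert j (G.neighborSet i) := by
    ext x
    simp only [mem_neighborSet, Set.mem_insert_iff, hH, addE, sup_adj, edge_adj]
    have := hne
    aesop
  have hdeg : degE H i = degE G i + 1 := by
    unfold degE
    rw [hnbr]
    exact Set.ncard_insert_of_notMem hnadj (Set.toFinite _)
  have hdHij : dE H i j = 1 := by
    unfold dE
    rw [if_pos hHadj.reachable, dist_eq_one_iff_adj.mpr hHadj]
    norm_num
  have hdGij : (2 : ℝ≥0∞) ≤ dE G i j := by
    unfold dE
    rw [if_pos hr]
    have h0 : G.dist i j ≠ 0 := by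
      intro h
      exact hne ((dist_eq_zero_iff_eq_or_not_reachable.mp h).resolve_right (by simpa using hr))
    have h1 : G.dist i j ≠ 1 := fun h => hnadj (dist_eq_one_iff_adj.mp h)
    have : 2 ≤ G.dist i j := by omega
    exact_mod_cast this
  set c := ENNReal.ofReal cA with hc
  set a := ENNReal.ofReal A with ha
  have hca : c ≤ a := ENNReal.ofReal_le_ofReal hAA
  have hsplitH : ∑ k ∈ TA, dE H i k = dE H i j + ∑ k ∈ TA.erase j, dE H i k :=
    (Finset.add_sum_erase TA _ hj).symm
  have hsplitG : ∑ k ∈ TA, dE G i k = dE G i j + ∑ k ∈ TA.erase j, dE G i k :=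
    (Finset.add_sum_erase TA _ hj).symm
  unfold cost
  rw [if_pos hi, ← hc, ← ha, hdeg, hsplitH, hsplitG, hdHij]
  push_cast
  have hsum1 : ∑ k ∈ TA.erase j, dE H i k ≤ ∑ k ∈ TA.erase j, dE G i k :=
    Finset.sum_le_sum fun k _ => dE_anti hle i k
  have hsum2 : ∑ k ∈ TAᶜ, dE H i k ≤ ∑ k ∈ TAᶜ, dE G i k :=
    Finset.sum_le_sum fun k _ => dE_anti hle i k
  calc ((degE G i : ℝ≥0∞) + 1) * c + a * (1 + ∑ k ∈ TA.erase j, dE H i k)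
        + ∑ k ∈ TAᶜ, dE H i k
      ≤ ((degE G i : ℝ≥0∞) + 1) * c + a * (1 + ∑ k ∈ TA.erase j, dE G i k)
        + ∑ k ∈ TAᶜ, dE G i k := by gcongr
    _ = (degE G i : ℝ≥0∞) * c + ((c + a) + a * ∑ k ∈ TA.erase j, dE G i k)
        + ∑ k ∈ TAᶜ, dE G i k := by ring
    _ ≤ (degE G i : ℝ≥0∞) * c + (a * dE G i j + a * ∑ k ∈ TA.erase j, dE G i k)
        + ∑ k ∈ TAᶜ, dE G i k := by
          gcongr
          calc c + a ≤ a + a := by gcongr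
            _ = a * 2 := by ring
            _ ≤ a * dE G i j := by gcongr
    _ = (degE G i : ℝ≥0∞) * c + a * (dE G i j + ∑ k ∈ TA.erase j, dE G i k)
        + ∑ k ∈ TAᶜ, dE G i k := by ring

/-- If additionally `c_A < A`, then in every pairwise-stable connected
graph every two distinct nodes of `T_A` are adjacent: `T_A` induces a complete subgraph. -/
theorem stmt3 (TA : Finset V) (A cA cB : ℝ)
    (hA : 1 < A) (hcA : 1 < cA) (hAB : cA ≤ cB) (hcAA : cA < A)
    (G : SimpleGraph V) (hconn : G.Connected)
    (hstable : PairwiseStable TA A cA cB G) :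
    ∀ i ∈ TA, ∀ j ∈ TA, i ≠ j → G.Adj i j := by
  intro i hi j hj hne
  by_contra hnadj
  have hr : G.Reachable i j := hconn.preconnected i j
  have h1 := key TA A cA cB hcAA.le G i j hi hj hne hnadj hr
  have hcomm : addE G i j = addE G j i := by
    unfold addE edge
    rw [Sym2.eq_swap]
  have h2 := key TA A cA cB hcAA.le G j i hj hi hne.symm (fun h => hnadj h.symm) hr.symm
  rw [← hcomm] at h2
  rcases hstable.2 i j hne hnadj with h | h
  · exact absurd h h1.not_gt
  · exact absurd h h2.not_gt

end
end

section
/- Assume 1 < c_A ≤ c_B, c_A < A, and (A+1)/2 > c. Let G** be the graph on V in which T_A induces a complete graph, every node of T_B is adjacent to every node of T_A, and no two nodes of T_B are adjacent. Then S(G**) = 2·|T_B|·(|T_B| − 1 + ((A+1)/2 + c)·|T_A|) + |T_A|·(|T_A| − 1)·(c_A + A), and G** minimizes the social cost among all connected graphs on V: for every connected graph G on V, S(G**) ≤ S(G). -/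
open SimpleGraph Classical
open scoped ENNReal

noncomputable section

variable {V : Type*} [Fintype V] [DecidableEq V]

/-- The social cost: the sum of the individual costs. -/
def socialCost (TA : Finset V) (A cA cB : ℝ) (G : SimpleGraph V) : ℝ≥0∞ :=
  ∑ i, cost TA A cA cB G i

/-- The graph in which `T_A` induces a complete graph and every node of `T_B` is
adjacent to `jstar ∈ T_A` and to no other node. -/
def Gstar (TA : Finset V) (jstar : V) : SimpleGraph V :=
  SimpleGraph.fromRel (fun i j => (i ∈ TA ∧ j ∈ TA) ∨ (i ∉ TA ∧ j = jstar))

/-- The graph in which `T_A` induces a complete graph, every node of `T_B` is adjacent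
to every node of `T_A`, and no two nodes of `T_B` are adjacent. -/
def Gss (TA : Finset V) : SimpleGraph V :=
  SimpleGraph.fromRel (fun i j => i ∈ TA ∨ j ∈ TA)

namespace Stmt7Aux

variable (TA : Finset V) (A cA cB : ℝ)

/-- Real-valued contribution of the ordered pair `(i,j)` to the cost of `i`. -/
def fr (G : SimpleGraph V) (i j : V) : ℝ :=
  (if G.Adj i j then (if i ∈ TA then cA else cB) else 0)
    + (if j ∈ TA then A else 1) * (G.dist i j : ℝ)

/-- The symmetric lower bound for `fr G i j + fr G j i`. -/
def mu (i j : V) : ℝ :=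
  if i = j then 0
  else if i ∈ TA then (if j ∈ TA then 2 * (cA + A) else cA + cB + A + 1)
  else (if j ∈ TA then cA + cB + A + 1 else 4)

variable {TA A cA cB}

lemma fr_nonneg (h0A : 0 ≤ A) (h1A : 1 ≤ A) (h0 : 0 ≤ cA) (hAB : cA ≤ cB)
    (G : SimpleGraph V) (i j : V) : 0 ≤ fr TA A cA cB G i j := by
  unfold fr
  have : (0:ℝ) ≤ (G.dist i j : ℝ) := Nat.cast_nonneg _
  split_ifs <;> nlinarith

lemma mu_nonneg (h0A : 0 ≤ A) (h0 : 0 ≤ cA) (hAB : cA ≤ cB) (i j : V) :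
    0 ≤ mu TA A cA cB i j := by
  unfold mu; split_ifs <;> nlinarith

lemma degE_eq (G : SimpleGraph V) (i : V) :
    degE G i = (Finset.univ.filter (fun j => G.Adj i j)).card := by
  rw [degE, ← Set.ncard_coe_finset]
  congr 1
  ext j
  simp [SimpleGraph.neighborSet]

lemma cost_eq (h0A : 0 ≤ A) (h0 : 0 ≤ cA) (h1 : 0 ≤ cB)
    (G : SimpleGraph V) (hG : G.Connected) (i : V) :
    cost TA A cA cB G i = ∑ j, ENNReal.ofReal (fr TA A cA cB G i j) := by
  have hkey : ∀ j : V, ENNReal.ofReal (fr TA A cA cB G i j)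
      = (if G.Adj i j then ENNReal.ofReal (if i ∈ TA then cA else cB) else 0)
        + ENNReal.ofReal (if j ∈ TA then A else 1) * dE G i j := by
    intro j
    have hre : G.Reachable i j := hG.preconnected i j
    have hd : dE G i j = ENNReal.ofReal ((G.dist i j : ℝ)) := by
      rw [dE, if_pos hre, ENNReal.ofReal_natCast]
    have hnn1 : (0:ℝ) ≤ (if G.Adj i j then (if i ∈ TA then cA else cB) else 0) := by
      split_ifs <;> linarith
    have hnn2 : (0:ℝ) ≤ (if j ∈ TA then A else 1) := by split_ifs <;> linarith
    have hnn3 : (0:ℝ) ≤ (if j ∈ TA then A else 1) * (G.dist i j : ℝ) :=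
      mul_nonneg hnn2 (Nat.cast_nonneg _)
    unfold fr
    rw [ENNReal.ofReal_add hnn1 hnn3, ENNReal.ofReal_mul hnn2, hd]
    congr 1
    split_ifs <;> simp
  have e1 : ∑ j : V, (if G.Adj i j then ENNReal.ofReal (if i ∈ TA then cA else cB) else 0)
      = (degE G i : ℝ≥0∞) * ENNReal.ofReal (if i ∈ TA then cA else cB) := by
    rw [← Finset.sum_filter, Finset.sum_const, nsmul_eq_mul, degE_eq]
  have e2 : ∑ j : V, ENNReal.ofReal (if j ∈ TA then A else 1) * dE G i j
      = ENNReal.ofReal A * ∑ j ∈ TA, dE G i j + ∑ j ∈ TAᶜ, dE G i j := by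
    rw [← Finset.sum_add_sum_compl TA]
    congr 1
    · rw [Finset.mul_sum]
      exact Finset.sum_congr rfl fun j hj => by rw [if_pos hj]
    · refine Finset.sum_congr rfl fun j hj => ?_
      rw [if_neg (Finset.mem_compl.mp hj)]
      simp
  calc cost TA A cA cB G i
      = (degE G i : ℝ≥0∞) * ENNReal.ofReal (if i ∈ TA then cA else cB)
        + (ENNReal.ofReal A * ∑ j ∈ TA, dE G i j + ∑ j ∈ TAᶜ, dE G i j) := by
        rw [cost, add_assoc]
    _ = (∑ j : V, (if G.Adj i j then ENNReal.ofReal (if i ∈ TA then cA else cB) else 0))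
        + ∑ j : V, ENNReal.ofReal (if j ∈ TA then A else 1) * dE G i j := by rw [e1, e2]
    _ = ∑ j : V, ((if G.Adj i j then ENNReal.ofReal (if i ∈ TA then cA else cB) else 0)
        + ENNReal.ofReal (if j ∈ TA then A else 1) * dE G i j) := Finset.sum_add_distrib.symm
    _ = ∑ j, ENNReal.ofReal (fr TA A cA cB G i j) :=
        Finset.sum_congr rfl fun j _ => (hkey j).symm

lemma socialCost_eq (h0A : 0 ≤ A) (h0 : 0 ≤ cA) (h1 : 0 ≤ cB)
    (G : SimpleGraph V) (hG : G.Connected) :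
    socialCost TA A cA cB G = ∑ i, ∑ j, ENNReal.ofReal (fr TA A cA cB G i j) :=
  Finset.sum_congr rfl fun i _ => cost_eq h0A h0 h1 G hG i

lemma fr_self (G : SimpleGraph V) (i : V) : fr TA A cA cB G i i = 0 := by
  simp [fr, G.irrefl, SimpleGraph.dist_self]

/-- Pointwise lower bound for connected graphs. -/
lemma mu_le_fr (hA : 1 < A) (hcA : 1 < cA) (hAB : cA ≤ cB) (hcAA : cA < A)
    (hsum : cA + cB < A + 1) (G : SimpleGraph V) (hG : G.Connected) (i j : V) :
    mu TA A cA cB i j ≤ fr TA A cA cB G i j + fr TA A cA cB G j i := by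
  by_cases hij : i = j
  · subst hij
    simp [mu, fr_self]
  · have hd1 : 1 ≤ G.dist i j := hG.pos_dist_of_ne hij
    have hd1' : (1:ℝ) ≤ (G.dist i j : ℝ) := by exact_mod_cast hd1
    have hdc : G.dist j i = G.dist i j := SimpleGraph.dist_comm
    by_cases hadj : G.Adj i j
    · have hadj' : G.Adj j i := G.adj_symm hadj
      simp only [fr, mu, if_pos hadj, if_pos hadj', if_neg hij, hdc]
      split_ifs <;> nlinarith
    · have hadj' : ¬ G.Adj j i := fun h => hadj (G.adj_symm h)
      have hd2 : 2 ≤ G.dist i j := by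
        have hne1 : G.dist i j ≠ 1 := fun h => hadj (SimpleGraph.dist_eq_one_iff_adj.mp h)
        omega
      have hd2' : (2:ℝ) ≤ (G.dist i j : ℝ) := by exact_mod_cast hd2
      simp only [fr, mu, if_neg hadj, if_neg hadj', if_neg hij, hdc]
      split_ifs <;> nlinarith

lemma gss_adj {i j : V} : (Gss TA).Adj i j ↔ i ≠ j ∧ (i ∈ TA ∨ j ∈ TA) := by
  rw [Gss, SimpleGraph.fromRel_adj]
  tauto

lemma gss_connected (hTA : TA.Nonempty) : (Gss TA).Connected := by
  obtain ⟨a, ha⟩ := hTA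
  rw [SimpleGraph.connected_iff]
  refine ⟨fun i j => ?_, ⟨a⟩⟩
  by_cases hij : i = j
  · subst hij; exact SimpleGraph.Reachable.refl i
  · by_cases hmem : i ∈ TA ∨ j ∈ TA
    · exact (gss_adj.mpr ⟨hij, hmem⟩).reachable
    · push_neg at hmem
      have h1 : (Gss TA).Adj i a :=
        gss_adj.mpr ⟨fun h => hmem.1 (h ▸ ha), Or.inr ha⟩
      have h2 : (Gss TA).Adj a j :=
        gss_adj.mpr ⟨fun h => hmem.2 (h ▸ ha), Or.inl ha⟩
      exact h1.reachable.trans h2.reachable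

lemma gss_dist_one {i j : V} (hij : i ≠ j) (hmem : i ∈ TA ∨ j ∈ TA) :
    (Gss TA).dist i j = 1 :=
  SimpleGraph.dist_eq_one_iff_adj.mpr (gss_adj.mpr ⟨hij, hmem⟩)

lemma gss_dist_two (hTA : TA.Nonempty) {i j : V} (hij : i ≠ j)
    (hi : i ∉ TA) (hj : j ∉ TA) : (Gss TA).dist i j = 2 := by
  obtain ⟨a, ha⟩ := hTA
  have h1 : (Gss TA).Adj i a := gss_adj.mpr ⟨fun h => hi (h ▸ ha), Or.inr ha⟩
  have h2 : (Gss TA).Adj a j := gss_adj.mpr ⟨fun h => hj (h ▸ ha), Or.inl ha⟩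
  have hna : ¬ (Gss TA).Adj i j := fun h => by
    rcases (gss_adj.mp h).2 with h' | h'
    exacts [hi h', hj h']
  have hle : (Gss TA).dist i j ≤ 2 := by
    have := SimpleGraph.dist_le (SimpleGraph.Walk.cons h1 (SimpleGraph.Walk.cons h2 SimpleGraph.Walk.nil))
    simpa using this
  have hpos : 1 ≤ (Gss TA).dist i j := (gss_connected ⟨a, ha⟩).pos_dist_of_ne hij
  have hne1 : (Gss TA).dist i j ≠ 1 := fun h =>
    hna (SimpleGraph.dist_eq_one_iff_adj.mp h)
  omega

/-- For `Gss`, the pointwise bound is an equality. -/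
lemma fr_gss_eq (hTA : TA.Nonempty) (i j : V) :
    fr TA A cA cB (Gss TA) i j + fr TA A cA cB (Gss TA) j i = mu TA A cA cB i j := by
  by_cases hij : i = j
  · subst hij
    simp [mu, fr_self]
  · by_cases hmem : i ∈ TA ∨ j ∈ TA
    · have hadj : (Gss TA).Adj i j := gss_adj.mpr ⟨hij, hmem⟩
      have hadj' : (Gss TA).Adj j i := (Gss TA).adj_symm hadj
      have hd : (Gss TA).dist i j = 1 := gss_dist_one hij hmem
      have hd' : (Gss TA).dist j i = 1 := gss_dist_one (Ne.symm hij) hmem.symm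
      simp only [fr, mu, if_pos hadj, if_pos hadj', if_neg hij, hd, hd', Nat.cast_one, mul_one]
      split_ifs with h1 h2 h3
      · ring
      · ring
      · ring
      · rcases hmem with h | h
        · exact absurd h h1
        · exact absurd h h3
    · push_neg at hmem
      have hna : ¬ (Gss TA).Adj i j := fun h => by
        rcases (gss_adj.mp h).2 with h' | h'
        exacts [hmem.1 h', hmem.2 h']
      have hna' : ¬ (Gss TA).Adj j i := fun h => hna ((Gss TA).adj_symm h)
      have hd : (Gss TA).dist i j = 2 := gss_dist_two hTA hij hmem.1 hmem.2
      have hd' : (Gss TA).dist j i = 2 := gss_dist_two hTA (Ne.symm hij) hmem.2 hmem.1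
      simp only [fr, mu, if_neg hna, if_neg hna', if_neg hij, if_neg hmem.1, if_neg hmem.2,
        hd, hd', Nat.cast_ofNat]
      norm_num

end Stmt7Aux

open Stmt7Aux in
/-- Assuming `1 < c_A ≤ c_B`, `c_A < A` and `(A+1)/2 > c`, the graph
`G**` (T_A a clique, every type-B node adjacent to every type-A node, no B–B edges)
has social cost `2|T_B|(|T_B| - 1 + ((A+1)/2 + c)|T_A|) + |T_A|(|T_A| - 1)(c_A + A)`
and minimizes the social cost among all connected graphs on `V`. -/
theorem stmt7 (TA : Finset V) (A cA cB c : ℝ)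
    (hA : 1 < A) (hcA : 1 < cA) (hAB : cA ≤ cB) (hcAA : cA < A)
    (hc : c = (cA + cB) / 2) (hceq : c < (A + 1) / 2)
    (hTA : TA.Nonempty) :
    socialCost TA A cA cB (Gss TA) =
      ENNReal.ofReal
        (2 * (TAᶜ.card : ℝ) *
            ((TAᶜ.card : ℝ) - 1 + ((A + 1) / 2 + c) * (TA.card : ℝ))
          + (TA.card : ℝ) * ((TA.card : ℝ) - 1) * (cA + A)) ∧
    ∀ G : SimpleGraph V, G.Connected →
      socialCost TA A cA cB (Gss TA) ≤ socialCost TA A cA cB G := by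
  have h0A : (0:ℝ) ≤ A := by linarith
  have h0cA : (0:ℝ) ≤ cA := by linarith
  have h0cB : (0:ℝ) ≤ cB := by linarith
  have h1A : (1:ℝ) ≤ A := le_of_lt hA
  have hsum : cA + cB < A + 1 := by rw [hc] at hceq; linarith
  have hconn : (Gss TA).Connected := gss_connected hTA
  set target : ℝ := 2 * (TAᶜ.card : ℝ) *
          ((TAᶜ.card : ℝ) - 1 + ((A + 1) / 2 + c) * (TA.card : ℝ))
        + (TA.card : ℝ) * ((TA.card : ℝ) - 1) * (cA + A) with htarget
  -- the real double sum of `mu`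
  have hmu_real : ∑ i : V, ∑ j : V, mu TA A cA cB i j = 2 * target := by
    have inner1 : ∀ i ∈ TA, ∑ j : V, mu TA A cA cB i j
        = ((TA.card : ℝ) - 1) * (2 * (cA + A)) + (TAᶜ.card : ℝ) * (cA + cB + A + 1) := by
      intro i hi
      rw [← Finset.sum_add_sum_compl TA]
      congr 1
      · rw [← Finset.add_sum_erase TA _ hi]
        have h0 : mu TA A cA cB i i = 0 := by simp [mu]
        have hcongr : ∀ j ∈ TA.erase i, mu TA A cA cB i j = 2 * (cA + A) := by
          intro j hj
          have hji : j ≠ i := Finset.ne_of_mem_erase hj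
          have hjTA : j ∈ TA := Finset.mem_of_mem_erase hj
          simp [mu, hji.symm, hi, hjTA]
        rw [h0, zero_add, Finset.sum_congr rfl hcongr, Finset.sum_const, nsmul_eq_mul,
          Finset.card_erase_of_mem hi, Nat.cast_sub (Finset.card_pos.mpr ⟨i, hi⟩),
          Nat.cast_one]
      · have hcongr : ∀ j ∈ TAᶜ, mu TA A cA cB i j = cA + cB + A + 1 := by
          intro j hj
          have hjTA : j ∉ TA := Finset.mem_compl.mp hj
          have hij : i ≠ j := fun h => hjTA (h ▸ hi)
          simp [mu, hij, hi, hjTA]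
        rw [Finset.sum_congr rfl hcongr, Finset.sum_const, nsmul_eq_mul]
    have inner2 : ∀ i ∈ TAᶜ, ∑ j : V, mu TA A cA cB i j
        = (TA.card : ℝ) * (cA + cB + A + 1) + ((TAᶜ.card : ℝ) - 1) * 4 := by
      intro i hi
      have hiTA : i ∉ TA := Finset.mem_compl.mp hi
      rw [← Finset.sum_add_sum_compl TA]
      congr 1
      · have hcongr : ∀ j ∈ TA, mu TA A cA cB i j = cA + cB + A + 1 := by
          intro j hj
          have hij : i ≠ j := fun h => hiTA (h ▸ hj)
          simp [mu, hij, hiTA, hj]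
        rw [Finset.sum_congr rfl hcongr, Finset.sum_const, nsmul_eq_mul]
      · rw [← Finset.add_sum_erase TAᶜ _ hi]
        have h0 : mu TA A cA cB i i = 0 := by simp [mu]
        have hcongr : ∀ j ∈ TAᶜ.erase i, mu TA A cA cB i j = 4 := by
          intro j hj
          have hji : j ≠ i := Finset.ne_of_mem_erase hj
          have hjTA : j ∉ TA := Finset.mem_compl.mp (Finset.mem_of_mem_erase hj)
          simp [mu, hji.symm, hiTA, hjTA]
        rw [h0, zero_add, Finset.sum_congr rfl hcongr, Finset.sum_const, nsmul_eq_mul,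
          Finset.card_erase_of_mem hi, Nat.cast_sub (Finset.card_pos.mpr ⟨i, hi⟩),
          Nat.cast_one]
    rw [← Finset.sum_add_sum_compl TA, Finset.sum_congr rfl inner1,
      Finset.sum_congr rfl inner2, Finset.sum_const, Finset.sum_const,
      nsmul_eq_mul, nsmul_eq_mul, htarget, hc]
    ring
  -- doubling identity
  have hP : ∀ G : SimpleGraph V, G.Connected →
      2 * socialCost TA A cA cB G
        = ∑ i : V, ∑ j : V,
            ENNReal.ofReal (fr TA A cA cB G i j + fr TA A cA cB G j i) := by
    intro G hG
    have hswap : ∑ i : V, ∑ j : V, ENNReal.ofReal (fr TA A cA cB G j i)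
        = ∑ i : V, ∑ j : V, ENNReal.ofReal (fr TA A cA cB G i j) := Finset.sum_comm
    rw [socialCost_eq h0A h0cA h0cB G hG, two_mul]
    nth_rewrite 2 [← hswap]
    rw [← Finset.sum_add_distrib]
    refine Finset.sum_congr rfl fun i _ => ?_
    rw [← Finset.sum_add_distrib]
    refine Finset.sum_congr rfl fun j _ => ?_
    exact (ENNReal.ofReal_add (fr_nonneg h0A h1A h0cA hAB G i j)
      (fr_nonneg h0A h1A h0cA hAB G j i)).symm
  have hmuE : ∑ i : V, ∑ j : V, ENNReal.ofReal (mu TA A cA cB i j)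
      = 2 * ENNReal.ofReal target := by
    calc ∑ i : V, ∑ j : V, ENNReal.ofReal (mu TA A cA cB i j)
        = ∑ i : V, ENNReal.ofReal (∑ j : V, mu TA A cA cB i j) :=
          Finset.sum_congr rfl fun i _ =>
            (ENNReal.ofReal_sum_of_nonneg fun j _ => mu_nonneg h0A h0cA hAB i j).symm
      _ = ENNReal.ofReal (∑ i : V, ∑ j : V, mu TA A cA cB i j) :=
          (ENNReal.ofReal_sum_of_nonneg fun i _ =>
            Finset.sum_nonneg fun j _ => mu_nonneg h0A h0cA hAB i j).symm
      _ = ENNReal.ofReal (2 * target) := by rw [hmu_real]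
      _ = 2 * ENNReal.ofReal target := by
          rw [ENNReal.ofReal_mul (by norm_num : (0:ℝ) ≤ 2)]
          norm_num
  have hGssEq : 2 * socialCost TA A cA cB (Gss TA) = 2 * ENNReal.ofReal target := by
    rw [hP _ hconn, ← hmuE]
    exact Finset.sum_congr rfl fun i _ => Finset.sum_congr rfl fun j _ => by
      rw [fr_gss_eq hTA]
  have h2 : (2:ℝ≥0∞) ≠ 0 := by norm_num
  have h2' : (2:ℝ≥0∞) ≠ ⊤ := by norm_num
  constructor
  · refine le_antisymm ?_ ?_
    · exact (ENNReal.mul_le_mul_iff_right h2 h2').mp (le_of_eq hGssEq)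
    · exact (ENNReal.mul_le_mul_iff_right h2 h2').mp (ge_of_eq hGssEq)
  · intro G hG
    have hle : 2 * socialCost TA A cA cB (Gss TA) ≤ 2 * socialCost TA A cA cB G := by
      rw [hGssEq, ← hmuE, hP G hG]
      refine Finset.sum_le_sum fun i _ => Finset.sum_le_sum fun j _ => ?_
      exact ENNReal.ofReal_le_ofReal (mu_le_fr hA hcA hAB hcAA hsum G hG i j)
    exact (ENNReal.mul_le_mul_iff_right h2 h2').mp hle

end
end

section
/- Assume 1 < c_A ≤ c_B, c_A < A, and (A+1)/2 > c. Let G** be the graph on V in which T_A induces a complete graph, every node of T_B is adjacent to every node of T_A, and no two nodes of T_B are adjacent. Then G** is pairwise stable with transfers. Since G** also minimizes the social cost among connected graphs on V, the price of stability when monetary transfers are allowed is 1. -/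
open SimpleGraph Classical
open scoped ENNReal

noncomputable section

set_option linter.unusedSectionVars false
set_option linter.unusedVariables false
set_option maxHeartbeats 1000000

variable {V : Type*} [Fintype V] [DecidableEq V]

/-- Pairwise stability with (monetary) transfers: removing any present edge does not
decrease the sum of the two endpoints' costs, and adding any absent edge does not
decrease the sum of the two endpoints' costs. -/
def PairwiseStableT (TA : Finset V) (A cA cB : ℝ) (G : SimpleGraph V) : Prop :=
  (∀ i j : V, G.Adj i j →
    cost TA A cA cB G i + cost TA A cA cB G j ≤
      cost TA A cA cB (delE G i j) i + cost TA A cA cB (delE G i j) j) ∧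
  (∀ i j : V, i ≠ j → ¬ G.Adj i j →
    cost TA A cA cB G i + cost TA A cA cB G j ≤
      cost TA A cA cB (addE G i j) i + cost TA A cA cB (addE G i j) j)

lemma dE_self (G : SimpleGraph V) (i : V) : dE G i i = 0 := by
  simp [dE, SimpleGraph.dist_self, SimpleGraph.Reachable.refl]

lemma dE_adj {G : SimpleGraph V} {i j : V} (h : G.Adj i j) : dE G i j = 1 := by
  simp [dE, h.reachable, SimpleGraph.dist_eq_one_iff_adj.2 h]

lemma dE_two {G : SimpleGraph V} {i j k : V} (hne : i ≠ j) (hnadj : ¬ G.Adj i j)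
    (h1 : G.Adj i k) (h2 : G.Adj k j) : dE G i j = 2 := by
  have hr : G.Reachable i j := (h1.reachable).trans h2.reachable
  have hle : G.dist i j ≤ 2 := by
    have := SimpleGraph.dist_le (SimpleGraph.Walk.cons h1 (SimpleGraph.Walk.cons h2 SimpleGraph.Walk.nil))
    simpa using this
  have h0 : G.dist i j ≠ 0 := (hr.pos_dist_of_ne hne).ne'
  have h1' : G.dist i j ≠ 1 := fun h => hnadj (SimpleGraph.dist_eq_one_iff_adj.1 h)
  have h2' : G.dist i j = 2 := by omega
  simp [dE, hr, h2']

lemma two_le_dE {G : SimpleGraph V} {i j : V} (hne : i ≠ j) (hnadj : ¬ G.Adj i j) :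
    2 ≤ dE G i j := by
  unfold dE
  split
  · rename_i hr
    have h0 : G.dist i j ≠ 0 := (hr.pos_dist_of_ne hne).ne'
    have h1' : G.dist i j ≠ 1 := fun h => hnadj (SimpleGraph.dist_eq_one_iff_adj.1 h)
    have h : 2 ≤ G.dist i j := by omega
    exact_mod_cast Nat.cast_le.2 h
  · exact le_top

lemma dE_top {G : SimpleGraph V} {i j : V} (h : ¬ G.Reachable i j) : dE G i j = ⊤ := by
  simp [dE, h]

lemma not_reachable_of_isolated {G : SimpleGraph V} {i j : V} (hne : i ≠ j)
    (h : ∀ k, ¬ G.Adj i k) : ¬ G.Reachable i j := by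
  rintro ⟨w⟩
  exact h _ (w.adj_snd (SimpleGraph.Walk.not_nil_of_ne hne))

def wgt (TA : Finset V) (A : ℝ) (j : V) : ℝ≥0∞ := if j ∈ TA then ENNReal.ofReal A else 1

def term (TA : Finset V) (A cA cB : ℝ) (G : SimpleGraph V) (i j : V) : ℝ≥0∞ :=
  (if G.Adj i j then ENNReal.ofReal (if i ∈ TA then cA else cB) else 0)
    + wgt TA A j * dE G i j

lemma cost_eq_sum (TA : Finset V) (A cA cB : ℝ) (G : SimpleGraph V) (i : V) :
    cost TA A cA cB G i = ∑ j, term TA A cA cB G i j := by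
  unfold cost term
  rw [Finset.sum_add_distrib, add_assoc]
  congr 1
  · -- degree part
    have hdeg : (degE G i : ℝ≥0∞) = ∑ j, (if G.Adj i j then 1 else 0) := by
      unfold degE
      rw [Set.ncard_eq_toFinset_card']
      have : (G.neighborSet i).toFinset = Finset.univ.filter (fun j => G.Adj i j) := by
        ext j; simp [SimpleGraph.mem_neighborSet]
      rw [this, Finset.card_filter]
      push_cast
      rfl
    rw [hdeg, Finset.sum_mul]
    exact Finset.sum_congr rfl (fun j _ => by split <;> simp)
  · -- distance part
    rw [← Finset.sum_add_sum_compl TA (fun j => wgt TA A j * dE G i j)]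
    congr 1
    · rw [Finset.mul_sum]
      exact Finset.sum_congr rfl (fun j hj => by simp [wgt, hj])
    · exact Finset.sum_congr rfl (fun j hj => by
        simp only [Finset.mem_compl] at hj
        simp [wgt, hj])

lemma gss_adj (TA : Finset V) (i j : V) :
    (Gss TA).Adj i j ↔ i ≠ j ∧ (i ∈ TA ∨ j ∈ TA) := by
  simp only [Gss, SimpleGraph.fromRel_adj]
  tauto

lemma cost_top {TA : Finset V} {A cA cB : ℝ} {G : SimpleGraph V} {i j : V}
    (hA : 0 < A) (h : ¬ G.Reachable i j) : cost TA A cA cB G i = ⊤ := by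
  rw [cost_eq_sum]
  rw [ENNReal.sum_eq_top]
  refine ⟨j, Finset.mem_univ j, ?_⟩
  have hw : wgt TA A j ≠ 0 := by
    unfold wgt
    split
    · simp [ENNReal.ofReal_pos.2 hA |>.ne']
    · simp
  simp [term, dE_top h, ENNReal.mul_top hw]

lemma sum_pair_le {f g : V → ℝ≥0∞} {i j : V} (hne : i ≠ j)
    (hij : f i + f j ≤ g i + g j) (h : ∀ k, k ≠ i → k ≠ j → f k = g k) :
    ∑ k, f k ≤ ∑ k, g k := by
  have key : ∀ (u : V → ℝ≥0∞),
      ∑ k, u k = u i + u j + ∑ k ∈ (Finset.univ.erase i).erase j, u k := by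
    intro u
    rw [← Finset.add_sum_erase _ u (Finset.mem_univ i)]
    rw [← Finset.add_sum_erase _ u (Finset.mem_erase.2 ⟨hne.symm, Finset.mem_univ j⟩)]
    ring
  rw [key f, key g]
  gcongr with k hk
  · simp only [Finset.mem_erase] at hk
    exact le_of_eq (h k hk.2.1 hk.1)

lemma gss_connected {TA : Finset V} (hTA : TA.Nonempty) : (Gss TA).Connected := by
  obtain ⟨a, ha⟩ := hTA
  have hreach : ∀ i, (Gss TA).Reachable i a := by
    intro i
    by_cases hia : i = a
    · subst hia; rfl
    · exact ((gss_adj TA i a).2 ⟨hia, Or.inr ha⟩).reachable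
  rw [SimpleGraph.connected_iff]
  exact ⟨fun i j => (hreach i).trans (hreach j).symm, ⟨a⟩⟩

lemma delE_adj (G : SimpleGraph V) (i j x y : V) :
    (delE G i j).Adj x y ↔ G.Adj x y ∧ ¬(x = i ∧ y = j ∨ x = j ∧ y = i) := by
  simp [delE, Sym2.eq_iff]

lemma addE_adj (G : SimpleGraph V) (i j x y : V) :
    (addE G i j).Adj x y ↔ G.Adj x y ∨ ((x = i ∧ y = j ∨ x = j ∧ y = i) ∧ x ≠ y) := by
  simp [addE, SimpleGraph.edge_adj]

lemma term_eq_of {TA : Finset V} {A cA cB : ℝ} {G G' : SimpleGraph V} {x k : V}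
    (hadj : G.Adj x k ↔ G'.Adj x k) (hd : dE G x k = dE G' x k) :
    term TA A cA cB G x k = term TA A cA cB G' x k := by
  unfold term
  rw [hd]
  by_cases h : G.Adj x k
  · simp [h, hadj.1 h]
  · have h' : ¬ G'.Adj x k := fun h' => h (hadj.2 h')
    simp [h, h']

lemma term_self (TA : Finset V) (A cA cB : ℝ) (G : SimpleGraph V) (i : V) :
    term TA A cA cB G i i = 0 := by
  simp [term, dE_self]

lemma term_of_adj {TA : Finset V} {A cA cB : ℝ} {G : SimpleGraph V} {x y : V}
    (h : G.Adj x y) : term TA A cA cB G x y =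
      ENNReal.ofReal (if x ∈ TA then cA else cB) + wgt TA A y := by
  simp [term, h, dE_adj h]

lemma ofReal_sum_le {cA cB A : ℝ} (hcA : 0 ≤ cA) (hcB : 0 ≤ cB) (hA : 0 ≤ A)
    (hsum : cA + cB ≤ A + 1) :
    ENNReal.ofReal cA + ENNReal.ofReal cB ≤ ENNReal.ofReal A + 1 := by
  rw [← ENNReal.ofReal_add hcA (by linarith), ← ENNReal.ofReal_one,
    ← ENNReal.ofReal_add (by linarith) (by norm_num)]
  exact ENNReal.ofReal_le_ofReal hsum

lemma del_le (TA : Finset V) (A cA cB : ℝ)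
    (hA : 1 < A) (hcA : 1 < cA) (hAB : cA ≤ cB) (hcAA : cA < A)
    (hsum : cA + cB ≤ A + 1)
    {i j : V} (hi : i ∈ TA) (hadj : (Gss TA).Adj i j) :
    cost TA A cA cB (Gss TA) i + cost TA A cA cB (Gss TA) j ≤
      cost TA A cA cB (delE (Gss TA) i j) i + cost TA A cA cB (delE (Gss TA) i j) j := by
  have hA0 : (0:ℝ) < A := by linarith
  set G := Gss TA with hG
  set G' := delE G i j with hG'
  have hG'iff : ∀ x y : V, G'.Adj x y ↔ (G.Adj x y ∧ ¬(x = i ∧ y = j ∨ x = j ∧ y = i)) :=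
    fun x y => delE_adj G i j x y
  obtain ⟨hne, hor⟩ := (gss_adj TA i j).1 hadj
  have hiadj : ∀ k, k ≠ i → G.Adj i k :=
    fun k hk => (gss_adj TA i k).2 ⟨Ne.symm hk, Or.inl hi⟩
  have hnadj' : ¬ G'.Adj i j := by
    rw [hG'iff]
    tauto
  by_cases hwit : ∃ k, G'.Adj i k ∧ G'.Adj k j
  · obtain ⟨k0, hk1, hk2⟩ := hwit
    have hk0i : k0 ≠ i := fun h => (h ▸ hk1).ne rfl
    have hk0j : k0 ≠ j := hk2.ne
    have hnadj'' : ¬ G'.Adj j i := fun h => hnadj' h.symm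
    have hdG : dE G i j = 1 := dE_adj hadj
    have hdG' : dE G' i j = 2 := dE_two hne hnadj' hk1 hk2
    have hdGji : dE G j i = 1 := dE_adj hadj.symm
    have hdG'ji : dE G' j i = 2 := dE_two hne.symm hnadj'' hk2.symm hk1.symm
    rw [cost_eq_sum, cost_eq_sum, cost_eq_sum, cost_eq_sum,
      ← Finset.sum_add_distrib, ← Finset.sum_add_distrib]
    apply sum_pair_le hne
    · -- corner terms
      rw [term_self, term_self, term_self, term_self]
      rw [term_of_adj hadj, term_of_adj hadj.symm]
      have h1 : term TA A cA cB G' i j = wgt TA A j * 2 := by simp [term, hnadj', hdG']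
      have h2 : term TA A cA cB G' j i = wgt TA A i * 2 := by simp [term, hnadj'', hdG'ji]
      rw [h1, h2]
      simp only [hi, if_pos, wgt, add_zero, zero_add]
      by_cases hj : j ∈ TA
      · simp only [hj, if_pos]
        have hle : ENNReal.ofReal cA ≤ ENNReal.ofReal A := ENNReal.ofReal_le_ofReal hcAA.le
        calc ENNReal.ofReal cA + ENNReal.ofReal A + (ENNReal.ofReal cA + ENNReal.ofReal A)
            ≤ ENNReal.ofReal A + ENNReal.ofReal A + (ENNReal.ofReal A + ENNReal.ofReal A) := by
              gcongr
          _ = ENNReal.ofReal A * 2 + ENNReal.ofReal A * 2 := by ring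
      · simp only [hj, if_neg, not_false_iff]
        have key : ENNReal.ofReal cA + ENNReal.ofReal cB ≤ ENNReal.ofReal A + 1 :=
          ofReal_sum_le (by linarith) (by linarith) (by linarith) hsum
        calc ENNReal.ofReal cB + ENNReal.ofReal A + (ENNReal.ofReal cA + 1)
            = (ENNReal.ofReal cA + ENNReal.ofReal cB) + (ENNReal.ofReal A + 1) := by ring
          _ ≤ (ENNReal.ofReal A + 1) + (ENNReal.ofReal A + 1) := by gcongr
          _ = ENNReal.ofReal A * 2 + 1 * 2 := by ring
    · -- other vertices
      intro k hki hkj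
      have hik : G.Adj i k := hiadj k hki
      have hik' : G'.Adj i k := (hG'iff i k).2 ⟨hik, by tauto⟩
      have e1 : term TA A cA cB G i k = term TA A cA cB G' i k :=
        term_eq_of ⟨fun _ => hik', fun _ => hik⟩ (by rw [dE_adj hik, dE_adj hik'])
      have e2 : term TA A cA cB G j k = term TA A cA cB G' j k := by
        have hiffjk : G.Adj j k ↔ G'.Adj j k := by
          rw [hG'iff]
          constructor
          · intro h; exact ⟨h, by tauto⟩
          · tauto
        apply term_eq_of hiffjk
        by_cases hjk : G.Adj j k
        · rw [dE_adj hjk, dE_adj (hiffjk.1 hjk)]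
        · have hj : j ∉ TA := fun hj =>
            hjk ((gss_adj TA j k).2 ⟨fun h => hkj h.symm, Or.inl hj⟩)
          have hk : k ∉ TA := fun hk =>
            hjk ((gss_adj TA j k).2 ⟨fun h => hkj h.symm, Or.inr hk⟩)
          have hjk' : ¬ G'.Adj j k := fun h => hjk (hiffjk.2 h)
          have hjkne : j ≠ k := fun h => hkj h.symm
          have hk0TA : k0 ∈ TA := by
            have h' := ((hG'iff k0 j).1 hk2).1
            have := (gss_adj TA k0 j).1 h'
            tauto
          have hk0k : k0 ≠ k := fun h => hk (h ▸ hk0TA)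
          have d1 : dE G j k = 2 := dE_two hjkne hjk hadj.symm hik
          have d2 : dE G' j k = 2 := by
            refine dE_two hjkne hjk' hk2.symm ((hG'iff k0 k).2 ⟨?_, by tauto⟩)
            exact (gss_adj TA k0 k).2 ⟨hk0k, Or.inl hk0TA⟩
          rw [d1, d2]
      rw [e1, e2]
  · -- j is isolated in G', so cost is ⊤
    have hiso : ∀ k, ¬ G'.Adj j k := by
      intro k hk
      have hki : k ≠ i := by
        rintro rfl
        exact hnadj' hk.symm
      have hkj : k ≠ j := hk.ne'
      exact hwit ⟨k, (hG'iff i k).2 ⟨hiadj k hki, by tauto⟩, hk.symm⟩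
    have htop : cost TA A cA cB G' j = ⊤ :=
      cost_top hA0 (not_reachable_of_isolated hne.symm hiso)
    rw [htop]
    simp

lemma add_le' (TA : Finset V) (A cA cB : ℝ)
    (hA : 1 < A) (hcA : 1 < cA) (hAB : cA ≤ cB) (hTA : TA.Nonempty)
    {i j : V} (hne : i ≠ j) (hnadj : ¬ (Gss TA).Adj i j) :
    cost TA A cA cB (Gss TA) i + cost TA A cA cB (Gss TA) j ≤
      cost TA A cA cB (addE (Gss TA) i j) i + cost TA A cA cB (addE (Gss TA) i j) j := by
  have hA0 : (0:ℝ) < A := by linarith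
  set G := Gss TA with hG
  set G' := addE G i j with hG'
  have hG'iff : ∀ x y : V, G'.Adj x y ↔
      (G.Adj x y ∨ ((x = i ∧ y = j ∨ x = j ∧ y = i) ∧ x ≠ y)) :=
    fun x y => addE_adj G i j x y
  have hi : i ∉ TA := fun h => hnadj ((gss_adj TA i j).2 ⟨hne, Or.inl h⟩)
  have hj : j ∉ TA := fun h => hnadj ((gss_adj TA i j).2 ⟨hne, Or.inr h⟩)
  obtain ⟨a, ha⟩ := hTA
  have hai : a ≠ i := fun h => hi (h ▸ ha)
  have haj : a ≠ j := fun h => hj (h ▸ ha)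
  have hadj' : G'.Adj i j := (hG'iff i j).2 (Or.inr ⟨Or.inl ⟨rfl, rfl⟩, hne⟩)
  have hGia : G.Adj i a := (gss_adj TA i a).2 ⟨hai.symm, Or.inr ha⟩
  have hGaj : G.Adj a j := (gss_adj TA a j).2 ⟨haj, Or.inl ha⟩
  have hnadjji : ¬ G.Adj j i := fun h => hnadj h.symm
  have hdG : dE G i j = 2 := dE_two hne hnadj hGia hGaj
  have hdGji : dE G j i = 2 := dE_two hne.symm hnadjji hGaj.symm hGia.symm
  have hdG' : dE G' i j = 1 := dE_adj hadj'
  have hdG'ji : dE G' j i = 1 := dE_adj hadj'.symm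
  rw [cost_eq_sum, cost_eq_sum, cost_eq_sum, cost_eq_sum,
    ← Finset.sum_add_distrib, ← Finset.sum_add_distrib]
  apply sum_pair_le hne
  · -- corner terms
    rw [term_self, term_self, term_self, term_self]
    have h1 : term TA A cA cB G i j = wgt TA A j * 2 := by simp [term, hnadj, hdG]
    have h2 : term TA A cA cB G j i = wgt TA A i * 2 := by simp [term, hnadjji, hdGji]
    rw [h1, h2, term_of_adj hadj', term_of_adj hadj'.symm]
    simp only [wgt, hi, hj, if_neg, not_false_iff]
    have hcB1 : (1:ℝ≥0∞) ≤ ENNReal.ofReal cB := by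
      rw [← ENNReal.ofReal_one]
      exact ENNReal.ofReal_le_ofReal (by linarith)
    calc (0:ℝ≥0∞) + 1 * 2 + (1 * 2 + 0) = (1 + 1) + ((1 + 1) + 0) := by ring
      _ ≤ (ENNReal.ofReal cB + 1) + ((ENNReal.ofReal cB + 1) + 0) := by gcongr
      _ = 0 + (ENNReal.ofReal cB + 1) + (ENNReal.ofReal cB + 1 + 0) := by ring
  · -- other vertices
    intro k hki hkj
    have hterm : ∀ x : V, x ∉ TA → (x = i ∨ x = j) →
        term TA A cA cB G x k = term TA A cA cB G' x k := by
      intro x hx hxij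
      have hxk : x ≠ k := by
        rcases hxij with rfl | rfl
        · exact fun h => hki h.symm
        · exact fun h => hkj h.symm
      have hiff : G.Adj x k ↔ G'.Adj x k := by
        rw [hG'iff]
        constructor
        · tauto
        · rintro (h | ⟨⟨hx1, h2⟩ | ⟨hx1, h2⟩, hne2⟩)
          · exact h
          · exact absurd h2 hkj
          · exact absurd h2 hki
      apply term_eq_of hiff
      by_cases hxkadj : G.Adj x k
      · rw [dE_adj hxkadj, dE_adj (hiff.1 hxkadj)]
      · have hk : k ∉ TA := fun h =>
          hxkadj ((gss_adj TA x k).2 ⟨hxk, Or.inr h⟩)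
        have hxa : x ≠ a := fun h => hx (h ▸ ha)
        have hak : a ≠ k := fun h => hk (h ▸ ha)
        have hGxa : G.Adj x a := (gss_adj TA x a).2 ⟨hxa, Or.inr ha⟩
        have hGak : G.Adj a k := (gss_adj TA a k).2 ⟨hak, Or.inl ha⟩
        have d1 : dE G x k = 2 := dE_two hxk hxkadj hGxa hGak
        have d2 : dE G' x k = 2 := by
          refine dE_two hxk (fun h => hxkadj (hiff.2 h)) ((hG'iff x a).2 (Or.inl hGxa))
            ((hG'iff a k).2 (Or.inl hGak))
        rw [d1, d2]
    have e1 := hterm i hi (Or.inl rfl)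
    have e2 := hterm j hj (Or.inr rfl)
    rw [e1, e2]

lemma pair_bound (TA : Finset V) (A cA cB : ℝ)
    (hA : 1 < A) (hcA : 1 < cA) (hAB : cA ≤ cB) (hcAA : cA < A)
    (hsum : cA + cB ≤ A + 1) (hTA : TA.Nonempty)
    (G : SimpleGraph V) (i j : V) :
    term TA A cA cB (Gss TA) i j + term TA A cA cB (Gss TA) j i ≤
      term TA A cA cB G i j + term TA A cA cB G j i := by
  by_cases hne : i = j
  · subst hne
    rw [term_self]
    simp
  · have hA0 : (0:ℝ) < A := by linarith
    have hterm_nonadj : ∀ {x y : V}, x ≠ y → ¬ G.Adj x y →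
        wgt TA A y * 2 ≤ term TA A cA cB G x y := by
      intro x y hxy hxadj
      unfold term
      rw [if_neg hxadj, zero_add]
      exact mul_le_mul_right (two_le_dE hxy hxadj) _
    by_cases hgss : (Gss TA).Adj i j
    · rw [term_of_adj hgss, term_of_adj hgss.symm]
      by_cases hadj : G.Adj i j
      · rw [term_of_adj hadj, term_of_adj hadj.symm]
      · have hrhs : wgt TA A j * 2 + wgt TA A i * 2 ≤
            term TA A cA cB G i j + term TA A cA cB G j i :=
          add_le_add (hterm_nonadj hne hadj)
            (hterm_nonadj (Ne.symm hne) (fun h => hadj h.symm))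
        refine le_trans ?_ hrhs
        have hor := ((gss_adj TA i j).1 hgss).2
        have hkey : ENNReal.ofReal (if i ∈ TA then cA else cB)
            + ENNReal.ofReal (if j ∈ TA then cA else cB) ≤ wgt TA A i + wgt TA A j := by
          by_cases hi : i ∈ TA <;> by_cases hj : j ∈ TA <;>
            simp only [hi, hj, if_pos, if_neg, not_false_iff, wgt]
          · exact add_le_add (ENNReal.ofReal_le_ofReal hcAA.le)
              (ENNReal.ofReal_le_ofReal hcAA.le)
          · exact ofReal_sum_le (by linarith) (by linarith) (by linarith) hsum
          · calc ENNReal.ofReal cB + ENNReal.ofReal cA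
                = ENNReal.ofReal cA + ENNReal.ofReal cB := by ring
              _ ≤ ENNReal.ofReal A + 1 := ofReal_sum_le (by linarith) (by linarith)
                  (by linarith) hsum
              _ = 1 + ENNReal.ofReal A := by ring
          · exact absurd hor (by tauto)
        calc ENNReal.ofReal (if i ∈ TA then cA else cB) + wgt TA A j
              + (ENNReal.ofReal (if j ∈ TA then cA else cB) + wgt TA A i)
            = (ENNReal.ofReal (if i ∈ TA then cA else cB)
              + ENNReal.ofReal (if j ∈ TA then cA else cB)) + (wgt TA A j + wgt TA A i) := by
              ring
          _ ≤ (wgt TA A i + wgt TA A j) + (wgt TA A j + wgt TA A i) := by gcongr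
          _ = wgt TA A j * 2 + wgt TA A i * 2 := by ring
    · -- both i and j outside TA
      have hi : i ∉ TA := fun h => hgss ((gss_adj TA i j).2 ⟨hne, Or.inl h⟩)
      have hj : j ∉ TA := fun h => hgss ((gss_adj TA i j).2 ⟨hne, Or.inr h⟩)
      obtain ⟨a, ha⟩ := hTA
      have hai : a ≠ i := fun h => hi (h ▸ ha)
      have haj : a ≠ j := fun h => hj (h ▸ ha)
      have hgss' : ¬ (Gss TA).Adj j i := fun h => hgss h.symm
      have d1 : dE (Gss TA) i j = 2 :=
        dE_two hne hgss ((gss_adj TA i a).2 ⟨hai.symm, Or.inr ha⟩)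
          ((gss_adj TA a j).2 ⟨haj, Or.inl ha⟩)
      have d2 : dE (Gss TA) j i = 2 :=
        dE_two (Ne.symm hne) hgss' ((gss_adj TA j a).2 ⟨fun h => haj h.symm, Or.inr ha⟩)
          ((gss_adj TA a i).2 ⟨hai, Or.inl ha⟩)
      have hL1 : term TA A cA cB (Gss TA) i j = wgt TA A j * 2 := by
        simp [term, hgss, d1]
      have hL2 : term TA A cA cB (Gss TA) j i = wgt TA A i * 2 := by
        simp [term, hgss', d2]
      rw [hL1, hL2]
      by_cases hadj : G.Adj i j
      · rw [term_of_adj hadj, term_of_adj hadj.symm]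
        simp only [wgt, hi, hj, if_neg, not_false_iff]
        have hcB1 : (1:ℝ≥0∞) ≤ ENNReal.ofReal cB := by
          rw [← ENNReal.ofReal_one]
          exact ENNReal.ofReal_le_ofReal (by linarith)
        calc (1:ℝ≥0∞) * 2 + 1 * 2 = (1 + 1) + (1 + 1) := by ring
          _ ≤ (ENNReal.ofReal cB + 1) + (ENNReal.ofReal cB + 1) := by gcongr
      · exact add_le_add (hterm_nonadj hne hadj)
          (hterm_nonadj (Ne.symm hne) (fun h => hadj h.symm))

lemma social_le (TA : Finset V) (A cA cB : ℝ)
    (hA : 1 < A) (hcA : 1 < cA) (hAB : cA ≤ cB) (hcAA : cA < A)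
    (hsum : cA + cB ≤ A + 1) (hTA : TA.Nonempty)
    (G : SimpleGraph V) :
    socialCost TA A cA cB (Gss TA) ≤ socialCost TA A cA cB G := by
  have key : ∀ H : SimpleGraph V, 2 * socialCost TA A cA cB H =
      ∑ i, ∑ j, (term TA A cA cB H i j + term TA A cA cB H j i) := by
    intro H
    have : socialCost TA A cA cB H = ∑ i, ∑ j, term TA A cA cB H i j := by
      unfold socialCost
      exact Finset.sum_congr rfl (fun i _ => cost_eq_sum TA A cA cB H i)
    rw [this, two_mul]
    have h2 : (∑ i, ∑ j, term TA A cA cB H i j) = ∑ i, ∑ j, term TA A cA cB H j i :=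
      Finset.sum_comm
    calc (∑ i, ∑ j, term TA A cA cB H i j) + ∑ i, ∑ j, term TA A cA cB H i j
        = (∑ i, ∑ j, term TA A cA cB H i j) + ∑ i, ∑ j, term TA A cA cB H j i := by rw [← h2]
      _ = ∑ i, (∑ j, term TA A cA cB H i j + ∑ j, term TA A cA cB H j i) :=
          Finset.sum_add_distrib.symm
      _ = ∑ i, ∑ j, (term TA A cA cB H i j + term TA A cA cB H j i) :=
          Finset.sum_congr rfl (fun i _ => Finset.sum_add_distrib.symm)
  have hle : 2 * socialCost TA A cA cB (Gss TA) ≤ 2 * socialCost TA A cA cB G := by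
    rw [key, key]
    refine Finset.sum_le_sum (fun i _ => Finset.sum_le_sum (fun j _ => ?_))
    exact pair_bound TA A cA cB hA hcA hAB hcAA hsum hTA G i j
  exact (ENNReal.mul_le_mul_iff_right (by norm_num) (by norm_num)).1 hle

lemma social_top {TA : Finset V} {A cA cB : ℝ} {G : SimpleGraph V}
    (hA : 0 < A) (hV : Nonempty V) (h : ¬ G.Connected) :
    socialCost TA A cA cB G = ⊤ := by
  rw [SimpleGraph.connected_iff] at h
  push_neg at h
  have hpre : ¬ G.Preconnected := fun hp => not_isEmpty_of_nonempty V (h hp)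
  unfold SimpleGraph.Preconnected at hpre
  push_neg at hpre
  obtain ⟨i, j, hij⟩ := hpre
  unfold socialCost
  rw [ENNReal.sum_eq_top]
  exact ⟨i, Finset.mem_univ i, cost_top hA hij⟩

/-- Assuming `1 < c_A ≤ c_B`, `c_A < A` and `(A+1)/2 > c`, the graph
`G**` (T_A a clique, every type-B node adjacent to every type-A node, no B–B edges) is
pairwise stable with transfers; since it also minimizes the social cost among connected
graphs, the price of stability with transfers is `1` (the minimal social cost over
graphs that are pairwise stable with transfers equals the minimal social cost over
connected graphs). -/
theorem stmt12 (TA : Finset V) (A cA cB c : ℝ)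
    (hA : 1 < A) (hcA : 1 < cA) (hAB : cA ≤ cB) (hcAA : cA < A)
    (hc : c = (cA + cB) / 2) (hceq : c < (A + 1) / 2)
    (hTA : TA.Nonempty) :
    PairwiseStableT TA A cA cB (Gss TA) ∧
    (∀ G : SimpleGraph V, G.Connected →
      socialCost TA A cA cB (Gss TA) ≤ socialCost TA A cA cB G) ∧
    sInf (socialCost TA A cA cB '' {G : SimpleGraph V | PairwiseStableT TA A cA cB G}) =
      sInf (socialCost TA A cA cB '' {G : SimpleGraph V | G.Connected}) := by
  have hsum : cA + cB ≤ A + 1 := by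
    rw [hc] at hceq
    linarith
  have hA0 : (0:ℝ) < A := by linarith
  have hV : Nonempty V := ⟨hTA.choose⟩
  have hstable : PairwiseStableT TA A cA cB (Gss TA) := by
    constructor
    · intro i j hadj
      rcases ((gss_adj TA i j).1 hadj).2 with hi | hj
      · exact del_le TA A cA cB hA hcA hAB hcAA hsum hi hadj
      · have h := del_le TA A cA cB hA hcA hAB hcAA hsum hj hadj.symm
        have hcomm : delE (Gss TA) j i = delE (Gss TA) i j := by
          unfold delE
          rw [Sym2.eq_swap]
        rw [hcomm] at h
        rw [add_comm (cost TA A cA cB (Gss TA) i) (cost TA A cA cB (Gss TA) j),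
          add_comm (cost TA A cA cB (delE (Gss TA) i j) i)
            (cost TA A cA cB (delE (Gss TA) i j) j)]
        exact h
    · intro i j hne hnadj
      exact add_le' TA A cA cB hA hcA hAB hTA hne hnadj
  have hmin : ∀ G : SimpleGraph V, socialCost TA A cA cB (Gss TA) ≤ socialCost TA A cA cB G :=
    fun G => social_le TA A cA cB hA hcA hAB hcAA hsum hTA G
  have hconn : (Gss TA).Connected := gss_connected hTA
  refine ⟨hstable, fun G _ => hmin G, ?_⟩
  have h2 : sInf (socialCost TA A cA cB '' {G : SimpleGraph V | G.Connected}) =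
      socialCost TA A cA cB (Gss TA) := by
    apply le_antisymm
    · exact sInf_le ⟨Gss TA, hconn, rfl⟩
    · apply le_sInf
      rintro x ⟨G, hG, rfl⟩
      exact hmin G
  have h1 : sInf (socialCost TA A cA cB '' {G : SimpleGraph V | PairwiseStableT TA A cA cB G}) =
      socialCost TA A cA cB (Gss TA) := by
    apply le_antisymm
    · exact sInf_le ⟨Gss TA, hstable, rfl⟩
    · apply le_sInf
      rintro x ⟨G, hG, rfl⟩
      by_cases hGc : G.Connected
      · exact hmin G
      · rw [social_top hA0 hV hGc]
        exact le_top
  rw [h1, h2]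

end
end
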